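/- arXiv:0807.2245 — 3 statements merged into one kernel-verified Lean document; each statement's English description precedes it below -/
import Mathlib

section
/- Fix r ∈ [2,∞). For x ∈ ℝ^d \ {0} define h(x) = 2 ||x||_r^{2-r} (|x_i|^{r-2} x_i)_{i=1}^d and h(0) = 0. Then for all x, y ∈ ℝ^d: ||x||_r^2 + h(x)^T y ≤ ||x+y||_r^2 ≤ ||x||_r^2 + h(x)^T y + (r-1) ||y||_r^2. -/
/-- The ℓ_r norm on ℝ^d for finite r. -/
noncomputable def rnorm (d : ℕ) (r : ℝ) (x : Fin d → ℝ) : ℝ :=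
  (∑ i, |x i| ^ r) ^ (1 / r)

/-- h(x) = 2 ‖x‖_r^{2-r} (|x_i|^{r-2} x_i)_i for x ≠ 0, and h(0) = 0. -/
noncomputable def hfun (d : ℕ) (r : ℝ) (x : Fin d → ℝ) : Fin d → ℝ :=
  if x = 0 then 0 else fun i => 2 * rnorm d r x ^ (2 - r) * (|x i| ^ (r - 2) * x i)

open Real Filter Finset

section helpers
variable {d : ℕ} {r : ℝ}

lemma nem_sum_nonneg (x : Fin d → ℝ) (r : ℝ) : 0 ≤ ∑ i, |x i| ^ r :=
  Finset.sum_nonneg fun _ _ => Real.rpow_nonneg (abs_nonneg _) _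

lemma nem_sum_pos (hr : 0 < r) {x : Fin d → ℝ} (hx : x ≠ 0) : 0 < ∑ i, |x i| ^ r := by
  obtain ⟨i, hi⟩ := Function.ne_iff.1 hx
  refine Finset.sum_pos' (fun j _ => Real.rpow_nonneg (abs_nonneg _) _) ⟨i, Finset.mem_univ i, ?_⟩
  have : 0 < |x i| := abs_pos.2 hi
  positivity

lemma nem_hsq (hr : 2 ≤ r) (u : ℝ) : |u| ^ (r - 2) * u * u = |u| ^ r := by
  rcases eq_or_ne u 0 with rfl | hu
  · simp [Real.zero_rpow (by positivity : r ≠ 0)]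
  · have h : u * u = |u| ^ (2:ℝ) := by
      rw [show ((2:ℝ)) = ((2:ℕ):ℝ) by norm_num, Real.rpow_natCast, sq_abs, sq]
    rw [mul_assoc, h, ← Real.rpow_add (abs_pos.2 hu)]
    norm_num

lemma nem_habs (hr : 2 ≤ r) (u : ℝ) : abs (|u| ^ (r - 2) * u) = |u| ^ (r - 1) := by
  rcases eq_or_ne u 0 with rfl | hu
  · simp [Real.zero_rpow (show r - 1 ≠ 0 by intro h; linarith)]
  · rw [abs_mul, abs_of_nonneg (Real.rpow_nonneg (abs_nonneg u) _),
      ← Real.rpow_add_one (abs_ne_zero.2 hu)]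
    congr 1
    ring

/-- Hölder: ∑ (|x i|^{r-2} x i) * (z i) ≤ S_x^{(r-1)/r} * ‖z‖_r -/
lemma nem_holder1 (hr : 2 ≤ r) (x z : Fin d → ℝ) :
    ∑ i, |x i| ^ (r - 2) * x i * z i
      ≤ (∑ i, |x i| ^ r) ^ ((r - 1)/r) * (∑ i, |z i| ^ r) ^ (1/r) := by
  have hr1 : (1:ℝ) < r := by linarith
  have hr0 : (0:ℝ) < r := by linarith
  have hpq : Real.HolderConjugate (r/(r-1)) r := by
    rw [Real.holderConjugate_iff]
    constructor
    · rw [lt_div_iff₀ (by linarith)]; linarith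
    · field_simp; ring
  have H := Real.inner_le_Lp_mul_Lq Finset.univ (fun i => |x i| ^ (r-2) * x i) z hpq
  refine H.trans_eq ?_
  congr 2
  · refine Finset.sum_congr rfl fun i _ => ?_
    rw [nem_habs hr, ← Real.rpow_mul (abs_nonneg (x i))]
    congr 1
    rw [← mul_div_assoc]
    exact mul_div_cancel_left₀ r (show r - 1 ≠ 0 by intro h; linarith)
  · field_simp

/-- Hölder: ∑ |z i|^{r-2} (y i)^2 ≤ S_z^{(r-2)/r} * (∑|y|^r)^{2/r} -/
lemma nem_holder2 (hr : 2 ≤ r) (z y : Fin d → ℝ) :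
    ∑ i, |z i| ^ (r - 2) * (y i * y i)
      ≤ (∑ i, |z i| ^ r) ^ ((r - 2)/r) * (∑ i, |y i| ^ r) ^ (2/r) := by
  rcases eq_or_lt_of_le hr with hr2 | hr2
  · rw [← hr2]
    norm_num
    refine le_of_eq ?_
    refine Finset.sum_congr rfl fun i _ => ?_
    ring
  have hr0 : (0:ℝ) < r := by linarith
  have hpq : Real.HolderConjugate (r/(r-2)) (r/2) := by
    rw [Real.holderConjugate_iff]
    constructor
    · rw [lt_div_iff₀ (by linarith)]; linarith
    · rw [inv_div, inv_div, ← add_div, show r - 2 + 2 = r by ring,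
        div_self (by linarith : r ≠ 0)]
  have H := Real.inner_le_Lp_mul_Lq Finset.univ (fun i => |z i| ^ (r-2))
    (fun i => y i * y i) hpq
  refine H.trans_eq ?_
  congr 2
  · refine Finset.sum_congr rfl fun i _ => ?_
    show abs (|z i| ^ (r-2)) ^ (r/(r-2)) = |z i| ^ r
    rw [abs_of_nonneg (Real.rpow_nonneg (abs_nonneg (z i)) _),
      ← Real.rpow_mul (abs_nonneg (z i))]
    congr 1
    rw [← mul_div_assoc]
    exact mul_div_cancel_left₀ r (show r - 2 ≠ 0 by intro h; linarith)
  · rw [one_div_div]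
  · refine Finset.sum_congr rfl fun i _ => ?_
    show |y i * y i| ^ (r/2) = |y i| ^ r
    rw [abs_mul, show |y i| * |y i| = |y i| ^ (2:ℝ) by
        rw [show ((2:ℝ)) = ((2:ℕ):ℝ) by norm_num, Real.rpow_natCast]; ring,
      ← Real.rpow_mul (abs_nonneg (y i))]
    congr 1
    rw [mul_comm, div_mul_cancel₀ r (by norm_num : (2:ℝ) ≠ 0)]
  · rw [one_div_div]
end helpers


lemma myL2 {r : ℝ} (hr : 2 ≤ r) (u : ℝ) :
    HasDerivAt (fun v : ℝ => |v| ^ (r - 2) * v) ((r - 1) * |u| ^ (r - 2)) u := by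
  rcases eq_or_lt_of_le hr with hr2 | hr2
  · -- r = 2
    rw [← hr2]
    simp only [sub_self, Real.rpow_zero, one_mul]
    have : HasDerivAt (fun v : ℝ => v) 1 u := hasDerivAt_id u
    convert this using 1
    norm_num
  rcases lt_trichotomy u 0 with hu | hu | hu
  · have h2 : (fun v : ℝ => (-v) ^ (r-2) * v) =ᶠ[nhds u] (fun v : ℝ => |v| ^ (r-2) * v) := by
      filter_upwards [Iio_mem_nhds hu] with v hv
      rw [abs_of_neg hv]
    have h1 : HasDerivAt (fun v : ℝ => (-v) ^ (r-2) * v)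
        (((r-2) * (-u) ^ (r - 2 - 1) * (-1)) * u + (-u) ^ (r-2) * 1) u := by
      have ha : HasDerivAt (fun v : ℝ => (-v) ^ (r-2)) ((r-2) * (-u) ^ (r - 2 - 1) * (-1)) u :=
        (Real.hasDerivAt_rpow_const (p := r-2) (Or.inl (by linarith : -u ≠ 0))).comp u
          (hasDerivAt_neg u)
      exact ha.mul (hasDerivAt_id u)
    have h3 := h1.congr_of_eventuallyEq h2.symm
    refine h3.congr_deriv ?_
    rw [abs_of_neg hu]
    rw [show r - 2 - 1 = (r-3) by ring, show r - 2 = (r-3) + 1 by ring,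
      Real.rpow_add (by linarith : (0:ℝ) < -u), Real.rpow_one]
    ring
  · subst hu
    rw [abs_zero, Real.zero_rpow (by linarith : r - 2 ≠ 0), mul_zero]
    rw [hasDerivAt_iff_tendsto_slope]
    apply squeeze_zero_norm (a := fun v : ℝ => |v| ^ (r - 2))
    · intro v
      rcases eq_or_ne v 0 with rfl | hv
      · simp [slope, Real.zero_rpow (by linarith : r - 2 ≠ 0)]
      · have : slope (fun v : ℝ => |v| ^ (r-2) * v) 0 v = |v| ^ (r-2) := by
          simp only [slope, sub_zero, vsub_eq_sub, smul_eq_mul, mul_zero]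
          field_simp
        rw [this, Real.norm_eq_abs, abs_of_nonneg (Real.rpow_nonneg (abs_nonneg v) _)]
    · have hc : ContinuousAt (fun v : ℝ => |v| ^ (r-2)) 0 :=
        (Real.continuousAt_rpow_const _ _ (Or.inr (by linarith))).comp continuous_abs.continuousAt
      have h0 : |(0:ℝ)| ^ (r-2) = 0 := by
        rw [abs_zero, Real.zero_rpow (by linarith : r - 2 ≠ 0)]
      have := hc.tendsto.mono_left (nhdsWithin_le_nhds (s := {(0:ℝ)}ᶜ))
      rwa [h0] at this
  · have h2 : (fun v : ℝ => v ^ (r-2) * v) =ᶠ[nhds u] (fun v : ℝ => |v| ^ (r-2) * v) := by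
      filter_upwards [Ioi_mem_nhds hu] with v hv
      rw [abs_of_pos hv]
    have h1 : HasDerivAt (fun v : ℝ => v ^ (r-2) * v)
        (((r-2) * u ^ (r - 2 - 1)) * u + u ^ (r-2) * 1) u :=
      (Real.hasDerivAt_rpow_const (p := r-2) (Or.inl (ne_of_gt hu))).mul (hasDerivAt_id u)
    have h3 := h1.congr_of_eventuallyEq h2.symm
    refine h3.congr_deriv ?_
    rw [abs_of_pos hu, show r - 2 - 1 = (r-3) by ring, show r - 2 = (r-3) + 1 by ring,
      Real.rpow_add hu, Real.rpow_one]
    ring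


noncomputable def nemS (d : ℕ) (r : ℝ) (x y : Fin d → ℝ) (t : ℝ) : ℝ :=
  ∑ i, |x i + t * y i| ^ r

noncomputable def nemT (d : ℕ) (r : ℝ) (x y : Fin d → ℝ) (t : ℝ) : ℝ :=
  ∑ i, |x i + t * y i| ^ (r - 2) * (x i + t * y i) * y i

noncomputable def nemU (d : ℕ) (r : ℝ) (x y : Fin d → ℝ) (t : ℝ) : ℝ :=
  ∑ i, (r - 1) * |x i + t * y i| ^ (r - 2) * (y i * y i)

section derivs
variable {d : ℕ} {r : ℝ} (x y : Fin d → ℝ)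

lemma nem_aff (i : Fin d) (t : ℝ) : HasDerivAt (fun t : ℝ => x i + t * y i) (y i) t := by
  simpa using (hasDerivAt_mul_const (y i)).const_add (x i)

lemma nemS_deriv (hr : 2 ≤ r) (t : ℝ) :
    HasDerivAt (nemS d r x y) (r * nemT d r x y t) t := by
  have hr1 : (1:ℝ) < r := by linarith
  have h := HasDerivAt.fun_sum (u := Finset.univ)
    (A := fun i (t : ℝ) => |x i + t * y i| ^ r)
    (A' := fun i => r * (|x i + t * y i| ^ (r - 2) * (x i + t * y i) * y i))
    (fun i _ => by
      have h2 := (hasDerivAt_abs_rpow (x i + t * y i) hr1).comp t (nem_aff x y i t)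
      refine h2.congr_deriv ?_
      ring)
  have h3 : r * nemT d r x y t = ∑ i, r * (|x i + t * y i| ^ (r - 2) * (x i + t * y i) * y i) := by
    rw [nemT, Finset.mul_sum]
  rw [h3]
  exact h

lemma nemT_deriv (hr : 2 ≤ r) (t : ℝ) :
    HasDerivAt (nemT d r x y) (nemU d r x y t) t := by
  show HasDerivAt (fun t : ℝ => ∑ i, |x i + t * y i| ^ (r - 2) * (x i + t * y i) * y i)
    (∑ i, (r - 1) * |x i + t * y i| ^ (r - 2) * (y i * y i)) t
  refine HasDerivAt.fun_sum fun i _ => ?_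
  have h2 := ((myL2 hr (x i + t * y i)).comp t (nem_aff x y i t)).mul_const (y i)
  refine h2.congr_deriv ?_
  ring

lemma nem_upper_hard (hr : 2 ≤ r) (hS : ∀ t : ℝ, 0 < nemS d r x y t) :
    nemS d r x y 1 ^ (2/r) ≤
      nemS d r x y 0 ^ (2/r)
      + 2 * nemS d r x y 0 ^ ((2-r)/r) * nemT d r x y 0
      + (r - 1) * (∑ i, |y i| ^ r) ^ (2/r) := by
  have hr0 : (0:ℝ) < r := by linarith
  have hrne : r ≠ 0 := ne_of_gt hr0
  set Q : ℝ := (∑ i, |y i| ^ r) ^ ((2:ℝ)/r) with hQdef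
  have hQ0 : 0 ≤ Q := Real.rpow_nonneg (nem_sum_nonneg y r) _
  set S := nemS d r x y with hSd
  set T := nemT d r x y with hTd
  set U := nemU d r x y with hUd
  -- derivative of g = S ^ (2/r)
  have hg : ∀ t : ℝ, HasDerivAt (fun t => S t ^ ((2:ℝ)/r)) (2 * S t ^ ((2-r)/r) * T t) t := by
    intro t
    have h1 := (nemS_deriv x y hr t).rpow_const (p := 2/r) (Or.inl (hS t).ne')
    convert h1 using 1
    rw [show (2-r)/r = 2/r - 1 by field_simp]
    field_simp
    ring
  -- derivative of t ↦ 2 * S t ^ ((2-r)/r) * T t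
  have hD : ∀ t : ℝ, HasDerivAt (fun t => 2 * S t ^ ((2-r)/r) * T t)
      ((2 * (r * T t * ((2-r)/r) * S t ^ ((2-r)/r - 1))) * T t
        + (2 * S t ^ ((2-r)/r)) * U t) t := by
    intro t
    exact (((nemS_deriv x y hr t).rpow_const (p := (2-r)/r)
      (Or.inl (hS t).ne')).const_mul 2).mul (nemT_deriv x y hr t)
  -- the second-derivative bound
  have hDle : ∀ t : ℝ,
      (2 * (r * T t * ((2-r)/r) * S t ^ ((2-r)/r - 1))) * T t
        + (2 * S t ^ ((2-r)/r)) * U t ≤ 2*(r-1)*Q := by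
    intro t
    have hSpos := hS t
    have hSe1 : (0:ℝ) ≤ S t ^ ((2-r)/r - 1) := Real.rpow_nonneg hSpos.le _
    have hSe2 : (0:ℝ) ≤ S t ^ ((2-r)/r) := Real.rpow_nonneg hSpos.le _
    have h1 : (2 * (r * T t * ((2-r)/r) * S t ^ ((2-r)/r - 1))) * T t ≤ 0 := by
      have e : (2 * (r * T t * ((2-r)/r) * S t ^ ((2-r)/r - 1))) * T t
          = (2 - r) * (2 * S t ^ ((2-r)/r - 1) * (T t)^2) := by
        field_simp
      rw [e]
      apply mul_nonpos_of_nonpos_of_nonneg (by linarith)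
      positivity
    have h2 : U t ≤ (r-1) * (S t ^ ((r-2)/r) * Q) := by
      have hU : U t = (r-1) * ∑ i, |x i + t * y i| ^ (r-2) * (y i * y i) := by
        rw [hUd, nemU, Finset.mul_sum]
        exact Finset.sum_congr rfl fun i _ => by ring
      rw [hU, hQdef]
      refine mul_le_mul_of_nonneg_left ?_ (by linarith)
      have e : S t = ∑ i, |x i + t * y i| ^ r := by rw [hSd, nemS]
      rw [e]
      simpa using nem_holder2 hr (fun i => x i + t * y i) y
    have h3 : (2 * S t ^ ((2-r)/r)) * U t ≤ 2*(r-1)*Q := by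
      calc (2 * S t ^ ((2-r)/r)) * U t
          ≤ (2 * S t ^ ((2-r)/r)) * ((r-1) * (S t ^ ((r-2)/r) * Q)) :=
            mul_le_mul_of_nonneg_left h2 (by positivity)
        _ = 2*(r-1) * (S t ^ ((2-r)/r) * S t ^ ((r-2)/r)) * Q := by ring
        _ = 2*(r-1)*Q := by
            rw [← Real.rpow_add hSpos, show (2-r)/r + (r-2)/r = 0 by ring, Real.rpow_zero]
            ring
    linarith
  -- ψ is antitone
  have hpsi : ∀ t : ℝ, HasDerivAt (fun t => 2 * S t ^ ((2-r)/r) * T t - 2*(r-1)*Q*t)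
      (((2 * (r * T t * ((2-r)/r) * S t ^ ((2-r)/r - 1))) * T t
        + (2 * S t ^ ((2-r)/r)) * U t) - 2*(r-1)*Q) t := by
    intro t
    exact (hD t).sub (by simpa using (hasDerivAt_id t).const_mul (2*(r-1)*Q))
  have hanti : Antitone (fun t => 2 * S t ^ ((2-r)/r) * T t - 2*(r-1)*Q*t) := by
    refine antitone_of_deriv_nonpos (fun t => (hpsi t).differentiableAt) (fun t => ?_)
    rw [(hpsi t).deriv]
    have := hDle t
    linarith
  -- φ is antitone on [0, ∞)
  have hphi : ∀ t : ℝ, HasDerivAt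
      (fun t => S t ^ ((2:ℝ)/r) - (2 * S 0 ^ ((2-r)/r) * T 0) * t - (r-1)*Q*t^2)
      ((2 * S t ^ ((2-r)/r) * T t) - (2 * S 0 ^ ((2-r)/r) * T 0) - (r-1)*Q*(2*t)) t := by
    intro t
    refine ((hg t).sub ?_).sub ?_
    · simpa using (hasDerivAt_id t).const_mul (2 * S 0 ^ ((2-r)/r) * T 0)
    · have := (hasDerivAt_pow 2 t).const_mul ((r-1)*Q)
      refine this.congr_deriv ?_
      norm_num
  have hmono : AntitoneOn
      (fun t => S t ^ ((2:ℝ)/r) - (2 * S 0 ^ ((2-r)/r) * T 0) * t - (r-1)*Q*t^2)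
      (Set.Ici 0) := by
    refine antitoneOn_of_deriv_nonpos (convex_Ici 0) ?_ ?_ ?_
    · exact (Differentiable.continuous fun t => (hphi t).differentiableAt).continuousOn
    · exact fun t _ => ((hphi t).differentiableAt).differentiableWithinAt
    · intro t ht
      rw [interior_Ici] at ht
      rw [(hphi t).deriv]
      have h := hanti (le_of_lt ht)
      simp only [mul_zero, sub_zero] at h
      nlinarith [h]
  have hfin := hmono Set.self_mem_Ici (Set.mem_Ici.2 zero_le_one) zero_le_one
  simp only [mul_zero, sub_zero, mul_one, one_pow, zero_pow] at hfin
  norm_num at hfin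
  linarith

end derivs

section glue
variable {d : ℕ} {r : ℝ}

lemma nem_rnorm_sq (hr0 : 0 < r) (x : Fin d → ℝ) :
    rnorm d r x ^ 2 = (∑ i, |x i| ^ r) ^ ((2:ℝ)/r) := by
  rw [rnorm, ← Real.rpow_natCast ((∑ i, |x i| ^ r) ^ (1/r)) 2,
    ← Real.rpow_mul (nem_sum_nonneg x r)]
  congr 1
  push_cast
  ring

lemma nem_rnorm_pow (hr0 : 0 < r) (x : Fin d → ℝ) (a : ℝ) :
    rnorm d r x ^ a = (∑ i, |x i| ^ r) ^ (a/r) := by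
  rw [rnorm, ← Real.rpow_mul (nem_sum_nonneg x r)]
  congr 1
  ring

lemma nem_hfun_sum (hr0 : 0 < r) {x : Fin d → ℝ} (hx : x ≠ 0) (y : Fin d → ℝ) :
    ∑ i, hfun d r x i * y i
      = 2 * (∑ i, |x i| ^ r) ^ ((2-r)/r) * ∑ i, |x i| ^ (r-2) * x i * y i := by
  simp only [hfun, if_neg hx]
  rw [Finset.mul_sum]
  refine Finset.sum_congr rfl fun i _ => ?_
  rw [nem_rnorm_pow hr0]
  ring

lemma nem_abs_pow_sum (c : ℝ) (y : Fin d → ℝ) :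
    ∑ i, |c * y i| ^ r = |c| ^ r * ∑ i, |y i| ^ r := by
  rw [Finset.mul_sum]
  refine Finset.sum_congr rfl fun i _ => ?_
  rw [abs_mul, Real.mul_rpow (abs_nonneg c) (abs_nonneg (y i))]

lemma nem_scale_sq (hr0 : 0 < r) (c : ℝ) (y : Fin d → ℝ) :
    rnorm d r (c • y) ^ 2 = c^2 * (∑ i, |y i| ^ r) ^ ((2:ℝ)/r) := by
  rw [nem_rnorm_sq hr0]
  have hs : ∑ i, |(c • y) i| ^ r = |c| ^ r * ∑ i, |y i| ^ r := by
    have : ∀ i, (c • y) i = c * y i := fun i => rfl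
    simp only [this]
    exact nem_abs_pow_sum c y
  rw [hs, Real.mul_rpow (Real.rpow_nonneg (abs_nonneg c) r) (nem_sum_nonneg y r)]
  congr 1
  rw [← Real.rpow_mul (abs_nonneg c), show r * ((2:ℝ)/r) = 2 by field_simp,
    show (2:ℝ) = ((2:ℕ):ℝ) by norm_num, Real.rpow_natCast, sq_abs]

end glue


/-- Nemirovski's two-sided bound:
‖x‖_r² + h(x)ᵀy ≤ ‖x+y‖_r² ≤ ‖x‖_r² + h(x)ᵀy + (r-1)‖y‖_r² for 2 ≤ r < ∞. -/
theorem stmt3 (d : ℕ) (r : ℝ) (hr : 2 ≤ r) (x y : Fin d → ℝ) :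
    rnorm d r x ^ 2 + ∑ i, hfun d r x i * y i ≤ rnorm d r (x + y) ^ 2 ∧
      rnorm d r (x + y) ^ 2
        ≤ rnorm d r x ^ 2 + ∑ i, hfun d r x i * y i + (r - 1) * rnorm d r y ^ 2 := by
  have hr0 : (0:ℝ) < r := by linarith
  have hrne : r ≠ 0 := ne_of_gt hr0
  have hadd : ∀ i, (x + y) i = x i + y i := fun i => rfl
  have hrn0 : rnorm d r (0:Fin d → ℝ) = 0 := by
    simp [rnorm, Real.zero_rpow hrne, Real.zero_rpow (one_div_ne_zero hrne),
      Real.zero_rpow (inv_ne_zero hrne)]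
  constructor
  · -- lower bound
    by_cases hx : x = 0
    · subst hx
      have h2 : ∀ i, hfun d r (0:Fin d → ℝ) i = 0 := by
        intro i; simp [hfun]
      simp only [h2, zero_mul, Finset.sum_const_zero, hrn0, add_zero]
      norm_num
      positivity
    · have hS : 0 < ∑ i, |x i| ^ r := nem_sum_pos hr0 hx
      have hNsq : rnorm d r x ^ 2 = (∑ i, |x i| ^ r) ^ ((2:ℝ)/r) := nem_rnorm_sq hr0 x
      have hMsq : rnorm d r (x+y) ^ 2 = (∑ i, |x i + y i| ^ r) ^ ((2:ℝ)/r) := by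
        rw [nem_rnorm_sq hr0]
        simp only [hadd]
      have hsumz : ∑ i, hfun d r x i * (x i + y i)
          = 2 * (∑ i, |x i| ^ r) ^ ((2-r)/r) * ∑ i, |x i| ^ (r-2) * x i * (x i + y i) :=
        nem_hfun_sum hr0 hx (fun i => x i + y i)
      have hsplit : ∑ i, hfun d r x i * (x i + y i)
          = ∑ i, hfun d r x i * x i + ∑ i, hfun d r x i * y i := by
        rw [← Finset.sum_add_distrib]
        exact Finset.sum_congr rfl fun i _ => by ring
      have hss : (∑ i, |x i| ^ r) ^ ((2-r)/r) * (∑ i, |x i| ^ r)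
          = (∑ i, |x i| ^ r) ^ ((2:ℝ)/r) := by
        nth_rewrite 2 [← Real.rpow_one (∑ i, |x i| ^ r)]
        rw [← Real.rpow_add hS]
        congr 1
        field_simp
        ring
      have hsumx : ∑ i, hfun d r x i * x i = 2 * rnorm d r x ^ 2 := by
        rw [nem_hfun_sum hr0 hx x]
        have e1 : ∑ i, |x i| ^ (r-2) * x i * x i = ∑ i, |x i| ^ r :=
          Finset.sum_congr rfl fun i _ => nem_hsq hr (x i)
        rw [e1, mul_assoc, hss, hNsq]
      have hH : ∑ i, hfun d r x i * (x i + y i) ≤ 2 * rnorm d r x * rnorm d r (x+y) := by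
        rw [hsumz]
        have hld := nem_holder1 hr x (fun i => x i + y i)
        have hc0 : (0:ℝ) ≤ 2 * (∑ i, |x i| ^ r) ^ ((2-r)/r) := by positivity
        calc 2 * (∑ i, |x i| ^ r) ^ ((2-r)/r) * ∑ i, |x i| ^ (r-2) * x i * (x i + y i)
            ≤ 2 * (∑ i, |x i| ^ r) ^ ((2-r)/r)
              * ((∑ i, |x i| ^ r) ^ ((r-1)/r) * (∑ i, |x i + y i| ^ r) ^ ((1:ℝ)/r)) := by
              rw [mul_assoc, mul_assoc]
              refine mul_le_mul_of_nonneg_left ?_ (by norm_num : (0:ℝ) ≤ 2)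
              refine mul_le_mul_of_nonneg_left ?_ (Real.rpow_nonneg hS.le _)
              simpa using hld
          _ = 2 * ((∑ i, |x i| ^ r) ^ ((2-r)/r) * (∑ i, |x i| ^ r) ^ ((r-1)/r))
              * (∑ i, |x i + y i| ^ r) ^ ((1:ℝ)/r) := by ring
          _ = 2 * rnorm d r x * rnorm d r (x+y) := by
              rw [← Real.rpow_add hS, show (2-r)/r + (r-1)/r = 1/r by ring]
              simp only [rnorm, hadd]
      have h2NM : 2 * rnorm d r x * rnorm d r (x+y) ≤ rnorm d r x ^ 2 + rnorm d r (x+y) ^ 2 :=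
        two_mul_le_add_sq _ _
      linarith
  · -- upper bound
    by_cases hx : x = 0
    · subst hx
      have h2 : ∀ i, hfun d r (0:Fin d → ℝ) i = 0 := by
        intro i; simp [hfun]
      have h0 : (0:Fin d → ℝ) + y = y := zero_add y
      simp only [h2, zero_mul, Finset.sum_const_zero, hrn0, add_zero, h0]
      have hy2 : (0:ℝ) ≤ rnorm d r y ^ 2 := sq_nonneg _
      nlinarith
    by_cases hy : y = 0
    · subst hy
      have h0 : x + (0:Fin d → ℝ) = x := add_zero x
      simp only [h0, Pi.zero_apply, mul_zero, Finset.sum_const_zero, hrn0, add_zero]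
      nlinarith [sq_nonneg (rnorm d r x)]
    by_cases hcol : ∃ c : ℝ, x = c • y
    · obtain ⟨c, rfl⟩ := hcol
      have hc : c ≠ 0 := fun h => hx (by rw [h, zero_smul])
      have hSy : 0 < ∑ i, |y i| ^ r := nem_sum_pos hr0 hy
      have hQy0 : (0:ℝ) ≤ (∑ i, |y i| ^ r) ^ ((2:ℝ)/r) :=
        Real.rpow_nonneg (nem_sum_nonneg y r) _
      have e1 : rnorm d r (c • y) ^ 2 = c^2 * (∑ i, |y i| ^ r) ^ ((2:ℝ)/r) :=
        nem_scale_sq hr0 c y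
      have e2 : rnorm d r (c • y + y) ^ 2 = (c+1)^2 * (∑ i, |y i| ^ r) ^ ((2:ℝ)/r) := by
        rw [show c • y + y = (c+1) • y from funext fun i => by
          show c * y i + y i = (c+1) * y i
          ring]
        exact nem_scale_sq hr0 (c+1) y
      have e3 : rnorm d r y ^ 2 = (∑ i, |y i| ^ r) ^ ((2:ℝ)/r) := nem_rnorm_sq hr0 y
      have e4 : ∑ i, hfun d r (c • y) i * y i = 2 * c * (∑ i, |y i| ^ r) ^ ((2:ℝ)/r) := by
        rw [nem_hfun_sum hr0 hx y]
        have hsmul : ∀ i, (c • y) i = c * y i := fun i => rfl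
        have hA : ∑ i, |(c • y) i| ^ r = |c|^r * ∑ i, |y i| ^ r := by
          simp only [hsmul]
          exact nem_abs_pow_sum c y
        have hB : ∑ i, |(c • y) i| ^ (r-2) * (c • y) i * y i
            = |c|^(r-2) * c * ∑ i, |y i| ^ r := by
          simp only [hsmul]
          rw [Finset.mul_sum]
          refine Finset.sum_congr rfl fun i _ => ?_
          rw [abs_mul, Real.mul_rpow (abs_nonneg c) (abs_nonneg (y i)), ← nem_hsq hr (y i)]
          ring
        rw [hA, hB]
        rw [Real.mul_rpow (Real.rpow_nonneg (abs_nonneg c) r) (nem_sum_nonneg y r)]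
        rw [← Real.rpow_mul (abs_nonneg c), show r * ((2-r)/r) = 2 - r by field_simp]
        have hcc : |c|^(2-r) * |c|^(r-2) = 1 := by
          rw [← Real.rpow_add (abs_pos.2 hc), show (2-r) + (r-2) = (0:ℝ) by ring,
            Real.rpow_zero]
        have hss : (∑ i, |y i| ^ r) ^ ((2-r)/r) * (∑ i, |y i| ^ r)
            = (∑ i, |y i| ^ r) ^ ((2:ℝ)/r) := by
          nth_rewrite 2 [← Real.rpow_one (∑ i, |y i| ^ r)]
          rw [← Real.rpow_add hSy]
          congr 1
          field_simp
          ring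
        calc 2 * (|c| ^ (2-r) * (∑ i, |y i| ^ r) ^ ((2-r)/r))
              * (|c| ^ (r-2) * c * ∑ i, |y i| ^ r)
            = 2 * c * ((|c| ^ (2-r) * |c| ^ (r-2))
                * ((∑ i, |y i| ^ r) ^ ((2-r)/r) * ∑ i, |y i| ^ r)) := by ring
          _ = 2 * c * (∑ i, |y i| ^ r) ^ ((2:ℝ)/r) := by rw [hcc, hss]; ring
      rw [e1, e2, e3, e4]
      nlinarith [mul_nonneg (show (0:ℝ) ≤ r - 2 by linarith) hQy0]
    · -- generic (non-collinear) case : the calculus argument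
      have hS : ∀ t : ℝ, 0 < nemS d r x y t := by
        intro t
        have hne : (fun i => x i + t * y i) ≠ 0 := by
          intro h
          refine hcol ⟨-t, funext fun i => ?_⟩
          have h2 := congrFun h i
          simp only [Pi.zero_apply] at h2
          show x i = -t * y i
          linarith
        have := nem_sum_pos hr0 hne
        rw [nemS]
        simpa using this
      have HU := nem_upper_hard x y hr hS
      have eS1 : nemS d r x y 1 = ∑ i, |x i + y i| ^ r := by
        rw [nemS]; simp
      have eS0 : nemS d r x y 0 = ∑ i, |x i| ^ r := by
        rw [nemS]; simp
      have eT0 : nemT d r x y 0 = ∑ i, |x i| ^ (r-2) * x i * y i := by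
        rw [nemT]; simp
      rw [eS1, eS0, eT0] at HU
      have hNsq : rnorm d r x ^ 2 = (∑ i, |x i| ^ r) ^ ((2:ℝ)/r) := nem_rnorm_sq hr0 x
      have hMsq : rnorm d r (x+y) ^ 2 = (∑ i, |x i + y i| ^ r) ^ ((2:ℝ)/r) := by
        rw [nem_rnorm_sq hr0]
        simp only [hadd]
      have hQsq : rnorm d r y ^ 2 = (∑ i, |y i| ^ r) ^ ((2:ℝ)/r) := nem_rnorm_sq hr0 y
      have hsum := nem_hfun_sum hr0 hx y
      rw [hNsq, hMsq, hQsq, hsum]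
      linarith
end

section
/- Let ε_1,...,ε_n be independent Rademacher variables and x_1,...,x_n ∈ ℝ^d. Then E || Σ_{i=1}^n ε_i x_i ||_∞^2 ≤ 2 log(2d) Σ_{i=1}^n ||x_i||_∞^2. In other words, ℓ_∞^d is of Rademacher type 2 with constant √(2 log(2d)). -/
open MeasureTheory ProbabilityTheory


lemma lemA {u : ℝ} (hu : 0 ≤ u) : Real.sinh u ≤ u * Real.cosh u := by
  have hmono : MonotoneOn (fun w => w * Real.cosh w - Real.sinh w) (Set.Ici (0:ℝ)) := by
    apply monotoneOn_of_deriv_nonneg (convex_Ici 0)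
    · exact ((continuous_id.mul Real.continuous_cosh).sub Real.continuous_sinh).continuousOn
    · intro w hw
      exact ((differentiableAt_id.mul (Real.differentiable_cosh w)).sub
        (Real.differentiable_sinh w)).differentiableWithinAt
    · intro w hw
      rw [interior_Ici] at hw
      have hD : HasDerivAt (fun w => w * Real.cosh w - Real.sinh w) (w * Real.sinh w) w := by
        have := ((hasDerivAt_id w).mul (Real.hasDerivAt_cosh w)).sub (Real.hasDerivAt_sinh w)
        refine this.congr_deriv ?_
        simp only [id_eq, one_mul]; ring
      rw [hD.deriv]
      exact mul_nonneg hw.le (Real.sinh_nonneg_iff.2 hw.le)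
  have := hmono (Set.self_mem_Ici) hu hu
  simp at this
  linarith

lemma lemB {a b : ℝ} (ha : 0 ≤ a) (hab : a ≤ b) : b * Real.sinh a ≤ a * Real.sinh b := by
  rcases eq_or_lt_of_le ha with h0 | h0
  · simp [← h0]
  have hcont : ContinuousOn (fun w => Real.sinh w / w) (Set.Ici a) := by
    apply ContinuousOn.div Real.continuous_sinh.continuousOn continuousOn_id
    intro w hw; exact ne_of_gt (lt_of_lt_of_le h0 hw)
  have hmono : MonotoneOn (fun w => Real.sinh w / w) (Set.Ici a) := by
    apply monotoneOn_of_deriv_nonneg (convex_Ici a) hcont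
    · intro w hw
      rw [interior_Ici] at hw
      have hw0 : w ≠ 0 := ne_of_gt (lt_trans h0 hw)
      exact ((Real.differentiable_sinh w).div differentiableAt_id hw0).differentiableWithinAt
    · intro w hw
      rw [interior_Ici] at hw
      have hw0 : (0:ℝ) < w := lt_trans h0 hw
      have hD : HasDerivAt (fun w => Real.sinh w / w)
          ((Real.cosh w * w - Real.sinh w * 1) / w ^ 2) w := by
        have := (Real.hasDerivAt_sinh w).div (hasDerivAt_id w) hw0.ne'
        exact this
      rw [hD.deriv]
      apply div_nonneg _ (sq_nonneg w)
      nlinarith [lemA hw0.le]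
  have key := hmono Set.self_mem_Ici hab hab
  simp only at key
  rw [div_le_div_iff₀ h0 (lt_of_lt_of_le h0 hab)] at key
  linarith

lemma lemC {v u : ℝ} (hv : 0 < v) (hu : 0 ≤ u) :
    u ^ 2 * Real.sinh v ≤ v ^ 2 * Real.sinh v + 2 * v * (Real.cosh u - Real.cosh v) := by
  set F : ℝ → ℝ := fun w => 2 * v * Real.cosh w - w ^ 2 * Real.sinh v with hF
  have hdiff : ∀ w : ℝ, DifferentiableAt ℝ F w := fun w =>
    ((Real.differentiable_cosh w).const_mul _).sub
      ((differentiableAt_pow 2).mul_const _)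
  have hderiv : ∀ w : ℝ, deriv F w = 2 * v * Real.sinh w - 2 * w * Real.sinh v := by
    intro w
    have hD : HasDerivAt F (2 * v * Real.sinh w - 2 * w * Real.sinh v) w := by
      have := ((Real.hasDerivAt_cosh w).const_mul (2*v)).sub
        ((hasDerivAt_pow 2 w).mul_const (Real.sinh v))
      refine this.congr_deriv ?_
      norm_num
    exact hD.deriv
  have key : F v ≤ F u := by
    rcases le_total u v with h | h
    · have hanti : AntitoneOn F (Set.Icc (0:ℝ) v) := by
        apply antitoneOn_of_deriv_nonpos (convex_Icc 0 v)
          (fun w hw => (hdiff w).continuousAt.continuousWithinAt)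
          (fun w hw => (hdiff w).differentiableWithinAt)
        intro w hw
        rw [interior_Icc] at hw
        rw [hderiv]
        nlinarith [lemB hw.1.le hw.2.le]
      exact hanti ⟨hu, h⟩ ⟨hu.trans h, le_refl v⟩ h
    · have hmono : MonotoneOn F (Set.Ici v) := by
        apply monotoneOn_of_deriv_nonneg (convex_Ici v)
          (fun w hw => (hdiff w).continuousAt.continuousWithinAt)
          (fun w hw => (hdiff w).differentiableWithinAt)
        intro w hw
        rw [interior_Ici] at hw
        rw [hderiv]
        nlinarith [lemB hv.le hw.le]
      exact hmono Set.self_mem_Ici h h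
  simp only [hF] at key
  nlinarith [key]


lemma rad_ae {Ω : Type*} [MeasurableSpace Ω] (μ : Measure Ω) [IsProbabilityMeasure μ]
    (e : Ω → ℝ) (he : Measurable e) (h1 : μ {ω | e ω = 1} = 1/2)
    (h2 : μ {ω | e ω = -1} = 1/2) :
    ∀ᵐ ω ∂μ, e ω = 1 ∨ e ω = -1 := by
  have hA : MeasurableSet {ω | e ω = 1} := he (measurableSet_singleton 1)
  have hB : MeasurableSet {ω | e ω = -1} := he (measurableSet_singleton (-1))
  have hdisj : Disjoint {ω | e ω = 1} {ω | e ω = -1} := by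
    rw [Set.disjoint_left]
    intro ω ha hb
    simp only [Set.mem_setOf_eq] at ha hb
    rw [ha] at hb; norm_num at hb
  have hAB : μ ({ω | e ω = 1} ∪ {ω | e ω = -1}) = 1 := by
    rw [measure_union hdisj hB, h1, h2, ENNReal.add_halves]
  have hcompl : μ ({ω | e ω = 1} ∪ {ω | e ω = -1})ᶜ = 0 :=
    (prob_compl_eq_zero_iff (hA.union hB)).mpr hAB
  rw [ae_iff]
  convert hcompl using 2
  ext ω; simp


lemma rad_integral {Ω : Type*} [MeasurableSpace Ω] (μ : Measure Ω) [IsProbabilityMeasure μ]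
    (e : Ω → ℝ) (he : Measurable e) (h1 : μ {ω | e ω = 1} = 1/2)
    (h2 : μ {ω | e ω = -1} = 1/2) (f : ℝ → ℝ) :
    ∫ ω, f (e ω) ∂μ = (f 1 + f (-1)) / 2 := by
  have hA : MeasurableSet {ω | e ω = 1} := he (measurableSet_singleton 1)
  have hB : MeasurableSet {ω | e ω = -1} := he (measurableSet_singleton (-1))
  have heq : (fun ω => f (e ω)) =ᵐ[μ]
      (fun ω => ({ω | e ω = 1}).indicator (fun _ => f 1) ω
        + ({ω | e ω = -1}).indicator (fun _ => f (-1)) ω) := by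
    filter_upwards [rad_ae μ e he h1 h2] with ω hω
    rcases hω with h | h
    · have hnb : ω ∉ {ω | e ω = -1} := by simp [Set.mem_setOf_eq, h]; norm_num
      rw [Set.indicator_of_mem (by exact h) , Set.indicator_of_notMem hnb, h, add_zero]
    · have hna : ω ∉ {ω | e ω = 1} := by simp [Set.mem_setOf_eq, h]; norm_num
      rw [Set.indicator_of_notMem hna, Set.indicator_of_mem (by exact h), h, zero_add]
  rw [integral_congr_ae heq,
    integral_add ((integrable_const (f 1)).indicator hA)
      ((integrable_const (f (-1))).indicator hB)]
  rw [integral_indicator_const _ hA, integral_indicator_const _ hB, measureReal_def, measureReal_def, h1, h2]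
  norm_num
  ring

lemma rad_mgf {Ω : Type*} [MeasurableSpace Ω] (μ : Measure Ω) [IsProbabilityMeasure μ]
    (e : Ω → ℝ) (he : Measurable e) (h1 : μ {ω | e ω = 1} = 1/2)
    (h2 : μ {ω | e ω = -1} = 1/2) (c u : ℝ) :
    mgf (fun ω => e ω * c) μ u = Real.cosh (u * c) := by
  have h := rad_integral μ e he h1 h2 (fun r => Real.exp (u * (r * c)))
  show ∫ ω, Real.exp (u * (e ω * c)) ∂μ = _
  rw [h]
  have e1 : u * (1 * c) = u * c := by ring
  have e2 : u * (-1 * c) = -(u * c) := by ring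
  rw [e1, e2, Real.cosh_eq]

set_option maxHeartbeats 1000000 in
/-- ℓ_∞^d is of Rademacher type 2 with constant √(2 log(2d)): for independent
Rademacher variables ε_i and vectors x_i ∈ ℝ^d,
E ‖Σ ε_i x_i‖_∞² ≤ 2 log(2d) Σ ‖x_i‖_∞². -/
theorem stmt12 {Ω : Type*} [MeasurableSpace Ω] (μ : Measure Ω) [IsProbabilityMeasure μ]
    (d n : ℕ) (ε : Fin n → Ω → ℝ) (x : Fin n → Fin d → ℝ)
    (hmeas : ∀ i, Measurable (ε i))
    (hindep : iIndepFun ε μ)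
    (hdist : ∀ i, μ {ω | ε i ω = 1} = 1/2 ∧ μ {ω | ε i ω = -1} = 1/2) :
    ∫ ω, (⨆ j, |∑ i, ε i ω * x i j|) ^ 2 ∂μ
      ≤ 2 * Real.log (2 * d) * ∑ i, (⨆ j, |x i j|) ^ 2 := by
  rcases Nat.eq_zero_or_pos d with hd0 | hd
  · subst hd0
    simp [Real.iSup_of_isEmpty]
  haveI : Nonempty (Fin d) := ⟨⟨0, hd⟩⟩
  set S : Fin d → Ω → ℝ := fun j ω => ∑ i, ε i ω * x i j with hS
  set M : Ω → ℝ := fun ω => ⨆ j, |S j ω| with hM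
  set s : Fin n → ℝ := fun i => ⨆ j, |x i j| with hsdef
  set σ2 : ℝ := ∑ i, s i ^ 2 with hσ2
  have hsle : ∀ i j, |x i j| ≤ s i := by
    intro i j
    simp only [hsdef]
    exact le_ciSup (f := fun j => |x i j|) (Set.finite_range _).bddAbove j
  have hs0 : ∀ i, 0 ≤ s i := fun i => (abs_nonneg _).trans (hsle i ⟨0, hd⟩)
  have hσ2nonneg : 0 ≤ σ2 := Finset.sum_nonneg fun i _ => sq_nonneg _
  -- goal reduction
  suffices hfinal : ∫ ω, M ω ^ 2 ∂μ ≤ 2 * Real.log (2 * d) * σ2 by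
    simpa only [hM, hS, hsdef, hσ2] using hfinal
  rcases eq_or_lt_of_le hσ2nonneg with hσ0 | hσpos
  · -- degenerate case : all x i j = 0
    have hx0 : ∀ i j, x i j = 0 := by
      intro i j
      have hsi : s i ^ 2 = 0 :=
        (Finset.sum_eq_zero_iff_of_nonneg (fun i _ => sq_nonneg (s i))).mp hσ0.symm i
          (Finset.mem_univ i)
      have hsi' : s i = 0 := by
        have := sq_nonneg (s i); nlinarith [hsle i j, abs_nonneg (x i j)]
      have := hsle i j; rw [hsi'] at this
      exact abs_eq_zero.mp (le_antisymm this (abs_nonneg _))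
    have hM0 : ∀ ω, M ω = 0 := by
      intro ω; rw [hM]; simp only [hS, hx0, mul_zero, Finset.sum_const_zero, abs_zero]
      exact ciSup_const
    simp only [hM0]
    rw [← hσ0]
    simp
  -- main case
  set L := Real.log (2 * d) with hL
  have h2d : (1:ℝ) < 2 * d := by
    have : (1:ℝ) ≤ (d:ℝ) := by exact_mod_cast hd
    linarith
  have hLpos : 0 < L := Real.log_pos h2d
  have hexpL : Real.exp L = 2 * d := Real.exp_log (by linarith)
  set t := Real.sqrt (2 * L / σ2) with ht
  have ht2 : t ^ 2 = 2 * L / σ2 := Real.sq_sqrt (by positivity)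
  have htpos : 0 < t := Real.sqrt_pos.mpr (by positivity)
  set v := 2 * L with hv
  have hvpos : 0 < v := by rw [hv]; positivity
  -- measurability
  have hSmeas : ∀ j, Measurable (S j) := fun j =>
    Finset.measurable_sum _ (fun i _ => (hmeas i).mul_const _)
  have hMmeas : Measurable M := by
    have hrw : M = Finset.univ.sup' Finset.univ_nonempty (fun j ω => |S j ω|) := by
      funext ω
      simp only [hM]
      rw [← Finset.sup'_univ_eq_ciSup]
      exact (Finset.sup'_apply Finset.univ_nonempty (fun j ω => |S j ω|) ω).symm
    rw [hrw]
    exact Finset.measurable_sup' Finset.univ_nonempty (fun j _ => (hSmeas j).abs)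
  -- a.e. bounds
  set C := ∑ i, s i with hC
  have hae1 : ∀ᵐ ω ∂μ, ∀ i, ε i ω = 1 ∨ ε i ω = -1 := by
    rw [ae_all_iff]
    intro i
    exact rad_ae μ (ε i) (hmeas i) (hdist i).1 (hdist i).2
  have hMbound : ∀ᵐ ω ∂μ, M ω ≤ C := by
    filter_upwards [hae1] with ω hω
    have hSb : ∀ j, |S j ω| ≤ C := by
      intro j
      rw [hS]
      calc |∑ i, ε i ω * x i j| ≤ ∑ i, |ε i ω * x i j| := Finset.abs_sum_le_sum_abs _ _
        _ = ∑ i, |ε i ω| * |x i j| := by simp [abs_mul]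
        _ = ∑ i, |x i j| := by
            refine Finset.sum_congr rfl fun i _ => ?_
            rcases hω i with h | h <;> rw [h] <;> norm_num
        _ ≤ ∑ i, s i := Finset.sum_le_sum fun i _ => hsle i j
    simp only [hM]
    exact ciSup_le hSb
  have hMnonneg : ∀ ω, 0 ≤ M ω := by
    intro ω
    simp only [hM]
    exact (abs_nonneg (S (⟨0, hd⟩ : Fin d) ω)).trans
      (le_ciSup (f := fun j => |S j ω|) (Set.finite_range _).bddAbove ⟨0, hd⟩)
  have hCnonneg : 0 ≤ C := Finset.sum_nonneg fun i _ => hs0 i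
  -- integrability
  have hint_M2 : Integrable (fun ω => M ω ^ 2) μ := by
    refine Integrable.mono' (integrable_const (C ^ 2))
      ((hMmeas.pow_const 2).aestronglyMeasurable) ?_
    filter_upwards [hMbound] with ω h1
    rw [Real.norm_eq_abs, abs_of_nonneg (sq_nonneg _)]
    exact pow_le_pow_left₀ (hMnonneg ω) h1 2
  have hint_coshM : Integrable (fun ω => Real.cosh (t * M ω)) μ := by
    refine Integrable.mono' (integrable_const (Real.cosh (t * C)))
      ((Real.continuous_cosh.measurable.comp (hMmeas.const_mul t)).aestronglyMeasurable) ?_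
    filter_upwards [hMbound] with ω h1
    rw [Real.norm_eq_abs, abs_of_pos (Real.cosh_pos _)]
    rw [Real.cosh_le_cosh]
    rw [abs_of_nonneg (mul_nonneg htpos.le (hMnonneg ω)),
      abs_of_nonneg (mul_nonneg htpos.le hCnonneg)]
    exact mul_le_mul_of_nonneg_left h1 htpos.le
  have hSbound : ∀ j, ∀ᵐ ω ∂μ, |S j ω| ≤ C := by
    intro j
    filter_upwards [hae1] with ω hω
    rw [hS]
    calc |∑ i, ε i ω * x i j| ≤ ∑ i, |ε i ω * x i j| := Finset.abs_sum_le_sum_abs _ _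
      _ = ∑ i, |ε i ω| * |x i j| := by simp [abs_mul]
      _ = ∑ i, |x i j| := by
          refine Finset.sum_congr rfl fun i _ => ?_
          rcases hω i with h | h <;> rw [h] <;> norm_num
      _ ≤ ∑ i, s i := Finset.sum_le_sum fun i _ => hsle i j
  have hint_coshS : ∀ j, Integrable (fun ω => Real.cosh (t * S j ω)) μ := by
    intro j
    refine Integrable.mono' (integrable_const (Real.cosh (t * C)))
      ((Real.continuous_cosh.measurable.comp ((hSmeas j).const_mul t)).aestronglyMeasurable) ?_
    filter_upwards [hSbound j] with ω h1
    rw [Real.norm_eq_abs, abs_of_pos (Real.cosh_pos _), Real.cosh_le_cosh, abs_mul,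
      abs_of_nonneg (mul_nonneg htpos.le hCnonneg), abs_of_nonneg htpos.le]
    exact mul_le_mul_of_nonneg_left h1 htpos.le
  have hint_exp : ∀ j (u : ℝ), Integrable (fun ω => Real.exp (u * S j ω)) μ := by
    intro j u
    refine Integrable.mono' (integrable_const (Real.exp (|u| * C)))
      ((Real.continuous_exp.measurable.comp ((hSmeas j).const_mul u)).aestronglyMeasurable) ?_
    filter_upwards [hSbound j] with ω h1
    rw [Real.norm_eq_abs, abs_of_pos (Real.exp_pos _), Real.exp_le_exp]
    calc u * S j ω ≤ |u * S j ω| := le_abs_self _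
      _ = |u| * |S j ω| := abs_mul _ _
      _ ≤ |u| * C := mul_le_mul_of_nonneg_left h1 (abs_nonneg u)
  -- mgf of S j
  have hmgf : ∀ j (u : ℝ), mgf (S j) μ u = ∏ i, Real.cosh (u * x i j) := by
    intro j u
    have hYindep : iIndepFun
        (fun i (ω : Ω) => ε i ω * x i j) μ :=
      hindep.comp (fun i r => r * x i j) (fun i => measurable_id.mul_const _)
    have hsum : S j = ∑ i : Fin n, (fun ω => ε i ω * x i j) := by
      funext ω; rw [hS]; simp [Finset.sum_apply]
    rw [hsum, hYindep.mgf_sum (fun i => (hmeas i).mul_const _) Finset.univ]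
    exact Finset.prod_congr rfl fun i _ =>
      rad_mgf μ (ε i) (hmeas i) (hdist i).1 (hdist i).2 (x i j) u
  -- expectation of cosh (t * S j)
  have hEcosh : ∀ j, ∫ ω, Real.cosh (t * S j ω) ∂μ = ∏ i, Real.cosh (t * x i j) := by
    intro j
    have hrw : (fun ω => Real.cosh (t * S j ω))
        = fun ω => (Real.exp (t * S j ω) + Real.exp ((-t) * S j ω)) / 2 := by
      funext ω
      rw [Real.cosh_eq, neg_mul]
    rw [hrw]
    rw [integral_div, integral_add (hint_exp j t) (hint_exp j (-t))]
    have h1 : ∫ ω, Real.exp (t * S j ω) ∂μ = mgf (S j) μ t := rfl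
    have h2 : ∫ ω, Real.exp ((-t) * S j ω) ∂μ = mgf (S j) μ (-t) := rfl
    rw [h1, h2, hmgf j t, hmgf j (-t)]
    have h3 : ∀ i : Fin n, Real.cosh ((-t) * x i j) = Real.cosh (t * x i j) :=
      fun i => by rw [neg_mul, Real.cosh_neg]
    rw [Finset.prod_congr rfl fun i _ => h3 i]
    ring
  -- product bound
  have hprod : ∀ j, ∏ i, Real.cosh (t * x i j) ≤ Real.exp (t ^ 2 * σ2 / 2) := by
    intro j
    calc ∏ i, Real.cosh (t * x i j) ≤ ∏ i, Real.exp ((t * x i j) ^ 2 / 2) :=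
        Finset.prod_le_prod (fun i _ => (Real.cosh_pos _).le)
          (fun i _ => Real.cosh_le_exp_half_sq _)
      _ = Real.exp (∑ i, (t * x i j) ^ 2 / 2) := by rw [Real.exp_sum]
      _ ≤ Real.exp (t ^ 2 * σ2 / 2) := by
          rw [Real.exp_le_exp]
          have hterm : ∀ i : Fin n, (t * x i j) ^ 2 / 2 ≤ t ^ 2 * s i ^ 2 / 2 := by
            intro i
            have : (x i j) ^ 2 ≤ s i ^ 2 := by
              rw [← sq_abs (x i j)]
              exact pow_le_pow_left₀ (abs_nonneg _) (hsle i j) 2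
            nlinarith [sq_nonneg t]
          calc ∑ i, (t * x i j) ^ 2 / 2 ≤ ∑ i, t ^ 2 * s i ^ 2 / 2 :=
              Finset.sum_le_sum fun i _ => hterm i
            _ = t ^ 2 * σ2 / 2 := by rw [hσ2, Finset.mul_sum, Finset.sum_div]
  -- pointwise : cosh (t M) ≤ ∑ j cosh (t S j)
  have hcoshM_ptwise : ∀ ω, Real.cosh (t * M ω) ≤ ∑ j, Real.cosh (t * S j ω) := by
    intro ω
    obtain ⟨j0, hj0⟩ := exists_eq_ciSup_of_finite (f := fun j => |S j ω|)
    have hMw : M ω = |S j0 ω| := by simp only [hM]; exact hj0.symm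
    have : t * M ω = |t * S j0 ω| := by
      rw [hMw, abs_mul, abs_of_nonneg htpos.le]
    rw [this, Real.cosh_abs]
    exact Finset.single_le_sum (fun j _ => (Real.cosh_pos (x := t * S j ω)).le)
      (Finset.mem_univ j0)
  -- expectation bound for cosh (t M)
  have ht2σ : t ^ 2 * σ2 / 2 = L := by
    rw [ht2, hv]; field_simp
  have hEcoshM : ∫ ω, Real.cosh (t * M ω) ∂μ ≤ Real.cosh v := by
    have step1 : ∫ ω, Real.cosh (t * M ω) ∂μ ≤ ∫ ω, ∑ j, Real.cosh (t * S j ω) ∂μ :=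
      integral_mono hint_coshM (integrable_finset_sum _ fun j _ => hint_coshS j)
        hcoshM_ptwise
    have step2 : ∫ ω, ∑ j, Real.cosh (t * S j ω) ∂μ
        = ∑ j, ∫ ω, Real.cosh (t * S j ω) ∂μ :=
      integral_finset_sum _ fun j _ => hint_coshS j
    have step3 : ∑ j, ∫ ω, Real.cosh (t * S j ω) ∂μ ≤ (d : ℝ) * Real.exp L := by
      calc ∑ j, ∫ ω, Real.cosh (t * S j ω) ∂μ
          = ∑ j : Fin d, ∏ i, Real.cosh (t * x i j) :=
            Finset.sum_congr rfl fun j _ => hEcosh j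
        _ ≤ ∑ j : Fin d, Real.exp (t ^ 2 * σ2 / 2) :=
            Finset.sum_le_sum fun j _ => hprod j
        _ = (d : ℝ) * Real.exp (t ^ 2 * σ2 / 2) := by
            rw [Finset.sum_const, Finset.card_univ, Fintype.card_fin, nsmul_eq_mul]
        _ = (d : ℝ) * Real.exp L := by rw [ht2σ]
    have step4 : (d : ℝ) * Real.exp L ≤ Real.cosh v := by
      have hev : Real.exp v = (2 * d) ^ 2 := by
        rw [hv, two_mul, Real.exp_add, hexpL]; ring
      have hc : Real.cosh v = (Real.exp v + Real.exp (-v)) / 2 := Real.cosh_eq v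
      have hpos := Real.exp_pos (-v)
      rw [hexpL]
      nlinarith [hpos]
    linarith [step1, step2 ▸ step1, step3, step4]
  -- final integration of the convexity inequality
  clear_value S M s σ2 L t v C
  have hsinh : 0 < Real.sinh v := Real.sinh_pos_iff.mpr hvpos
  have hkey : ∀ ω, (t ^ 2 * Real.sinh v) * M ω ^ 2
      ≤ (v ^ 2 * Real.sinh v - 2 * v * Real.cosh v) + 2 * v * Real.cosh (t * M ω) := by
    intro ω
    have h := lemC (v := v) (u := t * M ω) hvpos (mul_nonneg htpos.le (hMnonneg ω))
    nlinarith [h]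
  have hintL : Integrable (fun ω => (t ^ 2 * Real.sinh v) * M ω ^ 2) μ :=
    hint_M2.const_mul _
  have hintR : Integrable
      (fun ω => (v ^ 2 * Real.sinh v - 2 * v * Real.cosh v) + 2 * v * Real.cosh (t * M ω)) μ :=
    (integrable_const _).add (hint_coshM.const_mul _)
  have hInt := integral_mono hintL hintR hkey
  rw [integral_const_mul] at hInt
  rw [integral_add (integrable_const _) (hint_coshM.const_mul _), integral_const,
    integral_const_mul] at hInt
  simp only [probReal_univ, measure_univ, ENNReal.toReal_one, smul_eq_mul, one_mul] at hInt
  have hIM2 : t ^ 2 * Real.sinh v * ∫ ω, M ω ^ 2 ∂μ ≤ v ^ 2 * Real.sinh v := by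
    nlinarith [hEcoshM, hInt, hvpos]
  set I := ∫ ω, M ω ^ 2 ∂μ with hI
  have hvσ : σ2 * t ^ 2 = v := by rw [ht2]; field_simp
  have hmul := mul_le_mul_of_nonneg_left hIM2 hσ2nonneg
  have hL1 : σ2 * (t ^ 2 * Real.sinh v * I) = (v * Real.sinh v) * I := by
    rw [← hvσ]; ring
  have hL2 : σ2 * (v ^ 2 * Real.sinh v) = (v * Real.sinh v) * (v * σ2) := by ring
  have h2 : (v * Real.sinh v) * I ≤ (v * Real.sinh v) * (v * σ2) := by
    rw [← hL1, ← hL2]; exact hmul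
  have h3 : I ≤ v * σ2 := le_of_mul_le_mul_left h2 (mul_pos hvpos hsinh)
  exact h3
end

section
/- Let X_1,...,X_n be independent mean-zero random vectors in ℝ^d with ||X_i||_∞ ≤ κ almost surely, and let Γ ≥ max_{1≤j≤d} Σ_{i=1}^n Var(X_{i,j}). Then for every L > 0, sqrt(E ||S_n||_∞^2) ≤ κ L log(2d) + Γ L e(L)/κ, where e(L) = exp(1/L) − 1 − 1/L and S_n = Σ_i X_i. -/
open MeasureTheory ProbabilityTheory Real

-- (A) a ≤ sinh a for a ≥ 0
lemma aux_le_sinh {a : ℝ} (ha : 0 ≤ a) : a ≤ Real.sinh a := by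
  rcases eq_or_lt_of_le ha with h | h
  · simp [← h]
  · exact (Real.self_lt_sinh_iff.2 h).le

-- (M3)
lemma aux_exp_abs (x : ℝ) : Real.exp x - 1 - x ≤ Real.exp |x| - 1 - |x| := by
  rcases le_or_gt 0 x with h | h
  · rw [abs_of_nonneg h]
  · rw [abs_of_neg h]
    have := aux_le_sinh (a := -x) (by linarith)
    rw [Real.sinh_eq] at this
    simp only [neg_neg] at this
    linarith

-- (M1a) exp t ≤ t * exp t + 1 for t ≥ 0
lemma aux_M1a {t : ℝ} (ht : 0 ≤ t) : Real.exp t ≤ t * Real.exp t + 1 := by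
  have hmono : MonotoneOn (fun t : ℝ => t * Real.exp t + 1 - Real.exp t) (Set.Ici 0) := by
    have hd : ∀ x : ℝ, HasDerivAt (fun t : ℝ => t * Real.exp t + 1 - Real.exp t)
        (x * Real.exp x) x := by
      intro x
      have h1 := (((hasDerivAt_id x).mul (Real.hasDerivAt_exp x)).add_const 1).sub
        (Real.hasDerivAt_exp x)
      simp only [id_eq] at h1
      exact h1.congr_deriv (by ring)
    refine monotoneOn_of_deriv_nonneg (convex_Ici 0) ?_ ?_ ?_
    · exact (Continuous.continuousOn (by continuity))
    · intro x hx; exact (hd x).differentiableAt.differentiableWithinAt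
    · intro x hx
      rw [(hd x).deriv]
      rw [interior_Ici, Set.mem_Ioi] at hx
      positivity
  have := hmono (Set.self_mem_Ici) (Set.mem_Ici.2 ht) ht
  simp at this
  linarith

-- (M1) 2 exp t ≤ t exp t + t + 2 for t ≥ 0
lemma aux_M1 {t : ℝ} (ht : 0 ≤ t) : 2 * Real.exp t ≤ t * Real.exp t + t + 2 := by
  have hmono : MonotoneOn (fun t : ℝ => t * Real.exp t + t + 2 - 2 * Real.exp t) (Set.Ici 0) := by
    have hd : ∀ x : ℝ, HasDerivAt (fun t : ℝ => t * Real.exp t + t + 2 - 2 * Real.exp t)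
        (x * Real.exp x + 1 - Real.exp x) x := by
      intro x
      have h1 := ((((hasDerivAt_id x).mul (Real.hasDerivAt_exp x)).add
        (hasDerivAt_id x)).add_const 2).sub ((Real.hasDerivAt_exp x).const_mul 2)
      simp only [id_eq] at h1
      exact h1.congr_deriv (by ring)
    refine monotoneOn_of_deriv_nonneg (convex_Ici 0) ?_ ?_ ?_
    · exact (Continuous.continuousOn (by continuity))
    · intro x hx; exact (hd x).differentiableAt.differentiableWithinAt
    · intro x hx
      rw [(hd x).deriv]
      rw [interior_Ici, Set.mem_Ioi] at hx
      have := aux_M1a hx.le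
      linarith
  have := hmono (Set.self_mem_Ici) (Set.mem_Ici.2 ht) ht
  simp at this
  linarith


lemma aux_M2 : MonotoneOn (fun t : ℝ => (Real.exp t - 1 - t) / t ^ 2) (Set.Ioi 0) := by
  have hd : ∀ x : ℝ, 0 < x → HasDerivAt (fun t : ℝ => (Real.exp t - 1 - t) / t ^ 2)
      (((Real.exp x - 1) * x ^ 2 - (Real.exp x - 1 - x) * (2 * x)) / (x ^ 2) ^ 2) x := by
    intro x hx
    have h1 : HasDerivAt (fun t : ℝ => Real.exp t - 1 - t) (Real.exp x - 1) x := by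
      have := ((Real.hasDerivAt_exp x).sub_const 1).sub (hasDerivAt_id x)
      exact this.congr_deriv (by ring)
    have h2 : HasDerivAt (fun t : ℝ => t ^ 2) (2 * x) x := by
      simpa using (hasDerivAt_pow 2 x)
    exact h1.div h2 (by positivity)
  refine monotoneOn_of_deriv_nonneg (convex_Ioi 0) ?_ ?_ ?_
  · apply ContinuousOn.div
    · exact Continuous.continuousOn (by continuity)
    · exact Continuous.continuousOn (by continuity)
    · intro x hx; have : (0:ℝ) < x := hx; positivity
  · rw [interior_Ioi]
    intro x hx
    exact (hd x hx).differentiableAt.differentiableWithinAt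
  · rw [interior_Ioi]
    intro x hx
    rw [(hd x hx).deriv]
    have hx' : (0:ℝ) < x := hx
    have hM1 := aux_M1 hx'.le
    have hnum : 0 ≤ (Real.exp x - 1) * x ^ 2 - (Real.exp x - 1 - x) * (2 * x) := by
      nlinarith [mul_nonneg hx'.le
        (by linarith : (0:ℝ) ≤ x * Real.exp x + x + 2 - 2 * Real.exp x)]
    positivity

-- (Q) quadratic exp bound
lemma aux_quad {b x : ℝ} (hb : 0 < b) (hx : |x| ≤ b) :
    Real.exp x ≤ 1 + x + (Real.exp b - 1 - b) / b ^ 2 * x ^ 2 := by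
  have h1 : Real.exp x - 1 - x ≤ Real.exp |x| - 1 - |x| := aux_exp_abs x
  have key : Real.exp |x| - 1 - |x| ≤ (Real.exp b - 1 - b) / b ^ 2 * x ^ 2 := by
    rcases eq_or_lt_of_le (abs_nonneg x) with h0 | h0
    · rw [← h0]
      have hbpos : 0 ≤ (Real.exp b - 1 - b) / b ^ 2 :=
        div_nonneg (by linarith [Real.add_one_le_exp b]) (by positivity)
      have : x = 0 := abs_eq_zero.1 h0.symm
      simp [this]
    · have := aux_M2 (Set.mem_Ioi.2 h0) (Set.mem_Ioi.2 (lt_of_lt_of_le h0 hx)) hx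
      have habs : |x| ^ 2 = x ^ 2 := sq_abs x
      have hxpos : (0:ℝ) < |x| ^ 2 := by positivity
      rw [div_le_div_iff₀ hxpos (by positivity)] at this
      rw [← habs, div_mul_eq_mul_div, le_div_iff₀ (by positivity : (0:ℝ) < b ^ 2)]
      linarith
  linarith


-- sinh t ≤ t cosh t for t ≥ 0
lemma aux_sinh_le {t : ℝ} (ht : 0 ≤ t) : Real.sinh t ≤ t * Real.cosh t := by
  have hmono : MonotoneOn (fun t : ℝ => t * Real.cosh t - Real.sinh t) (Set.Ici 0) := by
    have hd : ∀ x : ℝ, HasDerivAt (fun t : ℝ => t * Real.cosh t - Real.sinh t)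
        (x * Real.sinh x) x := by
      intro x
      have h1 := ((hasDerivAt_id x).mul (Real.hasDerivAt_cosh x)).sub (Real.hasDerivAt_sinh x)
      simp only [id_eq] at h1
      exact h1.congr_deriv (by ring)
    refine monotoneOn_of_deriv_nonneg (convex_Ici 0) ?_ ?_ ?_
    · exact Continuous.continuousOn (by continuity)
    · intro x _; exact (hd x).differentiableAt.differentiableWithinAt
    · intro x hx
      rw [interior_Ici, Set.mem_Ioi] at hx
      rw [(hd x).deriv]
      exact mul_nonneg hx.le (Real.sinh_nonneg_iff.2 hx.le)
  have := hmono Set.self_mem_Ici (Set.mem_Ici.2 ht) ht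
  simp [Real.sinh_zero, Real.cosh_zero] at this
  linarith

-- sinh t / t monotone on Ioi 0
lemma aux_sinh_div_mono : MonotoneOn (fun t : ℝ => Real.sinh t / t) (Set.Ioi 0) := by
  have hd : ∀ x : ℝ, 0 < x → HasDerivAt (fun t : ℝ => Real.sinh t / t)
      ((Real.cosh x * x - Real.sinh x * 1) / x ^ 2) x := by
    intro x hx
    exact (Real.hasDerivAt_sinh x).div (hasDerivAt_id x) hx.ne'
  refine monotoneOn_of_deriv_nonneg (convex_Ioi 0) ?_ ?_ ?_
  · apply ContinuousOn.div
    · exact Continuous.continuousOn (by continuity)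
    · exact Continuous.continuousOn (by continuity)
    · intro x hx; exact (Set.mem_Ioi.1 hx).ne'
  · rw [interior_Ioi]; intro x hx
    exact (hd x hx).differentiableAt.differentiableWithinAt
  · rw [interior_Ioi]; intro x hx
    rw [(hd x hx).deriv]
    have := aux_sinh_le hx.le
    apply div_nonneg _ (by positivity)
    nlinarith
-- convexity of cosh ∘ sqrt on Ici 0
lemma aux_convex : ConvexOn ℝ (Set.Ici 0) (fun w : ℝ => Real.cosh (Real.sqrt w)) := by
  have hd : ∀ x : ℝ, 0 < x → HasDerivAt (fun w : ℝ => Real.cosh (Real.sqrt w))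
      (Real.sinh (Real.sqrt x) * (1 / (2 * Real.sqrt x))) x := by
    intro x hx
    exact (Real.hasDerivAt_sqrt hx.ne').cosh
  refine MonotoneOn.convexOn_of_deriv (convex_Ici 0) ?_ ?_ ?_
  · exact Continuous.continuousOn (Real.continuous_cosh.comp Real.continuous_sqrt)
  · rw [interior_Ici]; intro x hx
    exact (hd x hx).differentiableAt.differentiableWithinAt
  · rw [interior_Ici]
    intro a ha b hb hab
    rw [(hd a ha).deriv, (hd b hb).deriv]
    have h1 : Real.sqrt a ∈ Set.Ioi (0:ℝ) := Set.mem_Ioi.2 (Real.sqrt_pos.2 ha)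
    have h2 : Real.sqrt b ∈ Set.Ioi (0:ℝ) := Set.mem_Ioi.2 (Real.sqrt_pos.2 hb)
    have h3 := aux_sinh_div_mono h1 h2 (Real.sqrt_le_sqrt hab)
    simp only [div_eq_mul_inv] at h3 ⊢
    calc Real.sinh (Real.sqrt a) * (1 * (2 * Real.sqrt a)⁻¹)
        = Real.sinh (Real.sqrt a) * (Real.sqrt a)⁻¹ / 2 := by
          rw [mul_inv]; ring
      _ ≤ Real.sinh (Real.sqrt b) * (Real.sqrt b)⁻¹ / 2 := by linarith
      _ = Real.sinh (Real.sqrt b) * (1 * (2 * Real.sqrt b)⁻¹) := by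
          rw [mul_inv]; ring


lemma aux_integrable_of_bdd {Ω} [MeasurableSpace Ω] {μ : Measure Ω} [IsProbabilityMeasure μ]
    {f : Ω → ℝ} (hf : AEStronglyMeasurable f μ) {C : ℝ} (h : ∀ᵐ ω ∂μ, |f ω| ≤ C) :
    Integrable f μ :=
  (integrable_const C).mono' hf (by simpa using h)

lemma aux_mgf_le {Ω} [MeasurableSpace Ω] (μ : Measure Ω) [IsProbabilityMeasure μ]
    (κ L : ℝ) (hκ : 0 < κ) (hL : 0 < L) (Y : Ω → ℝ) (hY : Measurable Y)
    (hbd : ∀ᵐ ω ∂μ, |Y ω| ≤ κ) (hm : ∫ ω, Y ω ∂μ = 0) (θ : ℝ) (hθ : |θ| ≤ 1 / (κ * L)) :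
    mgf Y μ θ ≤ Real.exp ((Real.exp (1 / L) - 1 - 1 / L) / κ ^ 2 * variance Y μ) := by
  set b : ℝ := 1 / L with hb
  have hbpos : 0 < b := by positivity
  have heb : 0 ≤ Real.exp b - 1 - b := by linarith [Real.add_one_le_exp b]
  set c : ℝ := (Real.exp b - 1 - b) / κ ^ 2 with hc
  have hcpos : 0 ≤ c := by positivity
  -- pointwise bound
  have hpt : ∀ᵐ ω ∂μ, Real.exp (θ * Y ω) ≤ 1 + θ * Y ω + c * Y ω ^ 2 := by
    filter_upwards [hbd] with ω hω
    have habs : |θ * Y ω| ≤ b := by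
      rw [abs_mul]
      calc |θ| * |Y ω| ≤ (1 / (κ * L)) * κ :=
            mul_le_mul hθ hω (abs_nonneg _) (by positivity)
        _ = b := by rw [hb]; field_simp
    have h1 := aux_quad hbpos habs
    have h2 : (Real.exp b - 1 - b) / b ^ 2 * (θ * Y ω) ^ 2 ≤ c * Y ω ^ 2 := by
      rw [hc, hb]
      have hθ2 : θ ^ 2 ≤ 1 / (κ * L) ^ 2 := by
        rw [← sq_abs θ]
        calc |θ| ^ 2 ≤ (1 / (κ * L)) ^ 2 := by
              apply pow_le_pow_left₀ (abs_nonneg _) hθ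
          _ = 1 / (κ * L) ^ 2 := by rw [div_pow]; ring_nf
      have key : (Real.exp (1/L) - 1 - 1/L) / (1/L) ^ 2 * θ ^ 2
          ≤ (Real.exp (1/L) - 1 - 1/L) / κ ^ 2 := by
        rw [div_mul_eq_mul_div, div_le_div_iff₀ (by positivity) (by positivity)]
        calc (Real.exp (1/L) - 1 - 1/L) * θ ^ 2 * κ ^ 2
            ≤ (Real.exp (1/L) - 1 - 1/L) * (1 / (κ * L) ^ 2) * κ ^ 2 := by
              apply mul_le_mul_of_nonneg_right _ (by positivity)
              exact mul_le_mul_of_nonneg_left hθ2 (by rw [← hb]; exact heb)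
          _ = (Real.exp (1/L) - 1 - 1/L) * (1/L) ^ 2 := by
              field_simp
      calc (Real.exp (1/L) - 1 - 1/L) / (1/L) ^ 2 * (θ * Y ω) ^ 2
          = (Real.exp (1/L) - 1 - 1/L) / (1/L) ^ 2 * θ ^ 2 * Y ω ^ 2 := by ring
        _ ≤ (Real.exp (1/L) - 1 - 1/L) / κ ^ 2 * Y ω ^ 2 :=
            mul_le_mul_of_nonneg_right key (sq_nonneg _)
    linarith
  -- integrability
  have hYint : Integrable Y μ := aux_integrable_of_bdd hY.aestronglyMeasurable hbd
  have hY2int : Integrable (fun ω => Y ω ^ 2) μ := by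
    apply aux_integrable_of_bdd (hY.pow_const 2).aestronglyMeasurable (C := κ ^ 2)
    filter_upwards [hbd] with ω hω
    rw [abs_pow]
    exact pow_le_pow_left₀ (abs_nonneg _) hω 2
  have hexpint : Integrable (fun ω => Real.exp (θ * Y ω)) μ := by
    apply aux_integrable_of_bdd ((hY.const_mul θ).exp).aestronglyMeasurable
      (C := Real.exp (|θ| * κ))
    filter_upwards [hbd] with ω hω
    rw [abs_of_pos (Real.exp_pos _)]
    apply Real.exp_le_exp.2
    calc θ * Y ω ≤ |θ * Y ω| := le_abs_self _
      _ = |θ| * |Y ω| := abs_mul _ _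
      _ ≤ |θ| * κ := mul_le_mul_of_nonneg_left hω (abs_nonneg _)
  -- variance
  have hmem : MemLp Y 2 μ := MemLp.of_bound hY.aestronglyMeasurable κ (by simpa using hbd)
  have hvar : variance Y μ = ∫ ω, Y ω ^ 2 ∂μ := by
    rw [variance_eq_sub hmem]
    simp only [Pi.pow_apply]
    rw [show (∫ ω, Y ω ∂μ) = 0 from hm]
    ring
  -- integrate
  have hint : mgf Y μ θ ≤ 1 + θ * 0 + c * ∫ ω, Y ω ^ 2 ∂μ := by
    rw [mgf]
    calc ∫ ω, Real.exp (θ * Y ω) ∂μ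
        ≤ ∫ ω, (1 + θ * Y ω + c * Y ω ^ 2) ∂μ := by
          apply integral_mono_ae hexpint _ hpt
          exact (integrable_const 1).add ((hYint.const_mul θ)) |>.add (hY2int.const_mul c)
      _ = 1 + θ * ∫ ω, Y ω ∂μ + c * ∫ ω, Y ω ^ 2 ∂μ := by
          have h1 : Integrable (fun ω => 1 + θ * Y ω) μ :=
            (integrable_const 1).add (hYint.const_mul θ)
          have h0 : Integrable (fun _ : Ω => (1:ℝ)) μ := integrable_const 1
          rw [integral_add h1 (hY2int.const_mul c), integral_add h0 (hYint.const_mul θ),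
            integral_const, integral_const_mul, integral_const_mul]
          simp
      _ = 1 + θ * 0 + c * ∫ ω, Y ω ^ 2 ∂μ := by rw [hm]
  calc mgf Y μ θ ≤ 1 + c * ∫ ω, Y ω ^ 2 ∂μ := by simpa using hint
    _ ≤ Real.exp (c * ∫ ω, Y ω ^ 2 ∂μ) := by
        linarith [Real.add_one_le_exp (c * ∫ ω, Y ω ^ 2 ∂μ)]
    _ = Real.exp ((Real.exp (1/L) - 1 - 1/L) / κ ^ 2 * variance Y μ) := by
        rw [hvar]


lemma aux_cosh_le_exp_abs (x : ℝ) : Real.cosh x ≤ Real.exp |x| := by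
  rw [Real.cosh_eq]
  have h1 := Real.exp_le_exp.2 (le_abs_self x)
  have h2 := Real.exp_le_exp.2 (neg_le_abs x)
  linarith

set_option maxHeartbeats 1000000 in
/-- Bernstein-type bound for the sup-norm of a sum of independent mean-zero bounded
random vectors: if ‖X_i‖_∞ ≤ κ a.s. and Γ ≥ max_j Σ_i Var(X_{i,j}), then for all L > 0,
√(E ‖S_n‖_∞²) ≤ κ L log(2d) + Γ L e(L)/κ with e(L) = exp(1/L) − 1 − 1/L. -/
theorem stmt18 {Ω : Type*} [MeasurableSpace Ω] (μ : Measure Ω) [IsProbabilityMeasure μ]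
    (d n : ℕ) (hd : 1 ≤ d) (κ Γ L : ℝ) (hκ : 0 < κ) (hL : 0 < L)
    (X : Fin n → Ω → (Fin d → ℝ))
    (hmeas : ∀ i, Measurable (X i))
    (hindep : iIndepFun X μ)
    (hmean : ∀ i, ∫ ω, X i ω ∂μ = 0)
    (hbdd : ∀ i, ∀ᵐ ω ∂μ, (⨆ j, |X i ω j|) ≤ κ)
    (hΓ : ∀ j, ∑ i, variance (fun ω => X i ω j) μ ≤ Γ) :
    Real.sqrt (∫ ω, (⨆ j, |∑ i, X i ω j|) ^ 2 ∂μ)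
      ≤ κ * L * Real.log (2 * d) + Γ * L * (Real.exp (1 / L) - 1 - 1 / L) / κ := by
  have hdne : Nonempty (Fin d) := ⟨⟨0, hd⟩⟩
  set t : ℝ := κ * L with ht
  have htpos : 0 < t := by positivity
  set eL : ℝ := Real.exp (1 / L) - 1 - 1 / L with heL
  have heL0 : 0 ≤ eL := by
    have := Real.add_one_le_exp (1 / L); rw [heL]; linarith
  set B : ℝ := Real.exp (eL / κ ^ 2 * Γ) with hB
  have hBpos : 0 < B := Real.exp_pos _
  -- coordinate processes
  set S : Fin d → Ω → ℝ := fun j ω => ∑ i, X i ω j with hS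
  have hSmeas : ∀ j, Measurable (S j) :=
    fun j => Finset.measurable_sum _ (fun i _ => (measurable_pi_apply j).comp (hmeas i))
  -- coordinatewise a.s. bounds
  have hbdd' : ∀ i, ∀ᵐ ω ∂μ, ∀ j, |X i ω j| ≤ κ := by
    intro i
    filter_upwards [hbdd i] with ω hω j
    exact le_trans (le_ciSup (f := fun j => |X i ω j|)
      (Set.Finite.bddAbove (Set.finite_range _)) j) hω
  have hbddall : ∀ᵐ ω ∂μ, ∀ i j, |X i ω j| ≤ κ := by
    rw [ae_all_iff]; exact hbdd'
  have hSbd : ∀ᵐ ω ∂μ, ∀ j, |S j ω| ≤ n * κ := by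
    filter_upwards [hbddall] with ω hω j
    calc |S j ω| ≤ ∑ i, |X i ω j| := Finset.abs_sum_le_sum_abs _ _
      _ ≤ ∑ _i : Fin n, κ := Finset.sum_le_sum (fun i _ => hω i j)
      _ = n * κ := by simp [mul_comm]
  -- mgf bound for each coordinate sum
  have hmgf : ∀ (j : Fin d) (θ : ℝ), |θ| ≤ 1 / t → mgf (S j) μ θ ≤ B := by
    intro j θ hθ
    have hYmeas : ∀ i, Measurable (fun ω => X i ω j) :=
      fun i => (measurable_pi_apply j).comp (hmeas i)
    have hindep' : iIndepFun (fun i ω => X i ω j) μ :=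
      hindep.comp (fun _ v => v j) (fun _ => measurable_pi_apply j)
    have hsum : S j = ∑ i, (fun ω => X i ω j) := by
      funext ω; rw [hS]; simp
    have hprod : mgf (S j) μ θ = ∏ i, mgf (fun ω => X i ω j) μ θ := by
      rw [hsum]; exact hindep'.mgf_sum hYmeas Finset.univ
    have hXint : ∀ i, Integrable (X i) μ := by
      intro i
      refine (integrable_const κ).mono' (hmeas i).aestronglyMeasurable ?_
      filter_upwards [hbdd' i] with ω hω
      exact (pi_norm_le_iff_of_nonneg hκ.le).2 (fun j => by simpa using hω j)
    have hmean' : ∀ i, ∫ ω, X i ω j ∂μ = 0 := by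
      intro i
      have := (ContinuousLinearMap.proj (R := ℝ) (φ := fun _ : Fin d => ℝ) j).integral_comp_comm
        (hXint i)
      simp only [ContinuousLinearMap.proj_apply] at this
      rw [this, hmean i]
      rfl
    rw [hprod]
    calc ∏ i, mgf (fun ω => X i ω j) μ θ
        ≤ ∏ i, Real.exp (eL / κ ^ 2 * variance (fun ω => X i ω j) μ) := by
          refine Finset.prod_le_prod (fun i _ => mgf_nonneg) (fun i _ => ?_)
          have := aux_mgf_le μ κ L hκ hL (fun ω => X i ω j) (hYmeas i)
            ((hbdd' i).mono (fun ω h => h j)) (hmean' i) θ (by rwa [← ht])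
          calc mgf (fun ω => X i ω j) μ θ
              ≤ Real.exp ((Real.exp (1/L) - 1 - 1/L) / κ ^ 2 * variance (fun ω => X i ω j) μ) :=
                this
            _ = Real.exp (eL / κ ^ 2 * variance (fun ω => X i ω j) μ) := by rw [← heL]
      _ = Real.exp (eL / κ ^ 2 * ∑ i, variance (fun ω => X i ω j) μ) := by
          rw [← Real.exp_sum, Finset.mul_sum]
      _ ≤ B := by
          rw [hB]
          apply Real.exp_le_exp.2
          exact mul_le_mul_of_nonneg_left (hΓ j) (by positivity)
  -- the sup process
  set Z : Ω → ℝ := fun ω => ⨆ j, |S j ω| with hZ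
  have hZmeas : Measurable Z := Measurable.iSup (fun j => (hSmeas j).abs)
  have hZnn : ∀ ω, 0 ≤ Z ω := by
    intro ω
    exact le_trans (abs_nonneg (S (Classical.arbitrary (Fin d)) ω))
      (le_ciSup (f := fun j => |S j ω|) (Set.Finite.bddAbove (Set.finite_range _))
        (Classical.arbitrary (Fin d)))
  have hZbd : ∀ᵐ ω ∂μ, Z ω ≤ n * κ := by
    filter_upwards [hSbd] with ω hω
    exact ciSup_le (fun j => hω j)
  -- pointwise cosh bound
  have hpt : ∀ ω, Real.cosh (Z ω / t) ≤ ∑ j, Real.cosh (S j ω / t) := by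
    intro ω
    obtain ⟨j₀, hj₀⟩ := Finite.exists_max (fun j => |S j ω|)
    have hZeq : Z ω = |S j₀ ω| :=
      le_antisymm (ciSup_le hj₀)
        (le_ciSup (f := fun j => |S j ω|) (Set.Finite.bddAbove (Set.finite_range _)) j₀)
    have h1 : Real.cosh (Z ω / t) = Real.cosh (S j₀ ω / t) := by
      rw [hZeq, ← Real.cosh_abs (S j₀ ω / t), abs_div, abs_of_pos htpos]
    rw [h1]
    exact Finset.single_le_sum (f := fun j => Real.cosh (S j ω / t))
      (fun j _ => (Real.cosh_pos _).le) (Finset.mem_univ j₀)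
  -- integrability
  have hZ2int : Integrable (fun ω => (Z ω / t) ^ 2) μ := by
    refine aux_integrable_of_bdd ((hZmeas.div_const t).pow_const 2).aestronglyMeasurable
      (C := (n * κ / t) ^ 2) ?_
    filter_upwards [hZbd] with ω hω
    rw [abs_pow, abs_div, abs_of_pos htpos, abs_of_nonneg (hZnn ω)]
    apply pow_le_pow_left₀ (div_nonneg (hZnn ω) htpos.le)
    exact (div_le_div_iff_of_pos_right htpos).2 hω
  have hcoshZint : Integrable (fun ω => Real.cosh (Z ω / t)) μ := by
    refine aux_integrable_of_bdd (Real.measurable_cosh.comp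
      (hZmeas.div_const t)).aestronglyMeasurable (C := Real.exp (n * κ / t)) ?_
    filter_upwards [hZbd] with ω hω
    rw [abs_of_pos (Real.cosh_pos _)]
    refine (aux_cosh_le_exp_abs _).trans (Real.exp_le_exp.2 ?_)
    rw [abs_div, abs_of_pos htpos, abs_of_nonneg (hZnn ω)]
    exact (div_le_div_iff_of_pos_right htpos).2 hω
  have hexpSint : ∀ (j : Fin d) (θ : ℝ), |θ| ≤ 1 / t →
      Integrable (fun ω => Real.exp (θ * S j ω)) μ := by
    intro j θ hθ
    refine aux_integrable_of_bdd (((hSmeas j).const_mul θ).exp).aestronglyMeasurable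
      (C := Real.exp ((1 / t) * (n * κ))) ?_
    filter_upwards [hSbd] with ω hω
    rw [abs_of_pos (Real.exp_pos _)]
    apply Real.exp_le_exp.2
    calc θ * S j ω ≤ |θ * S j ω| := le_abs_self _
      _ = |θ| * |S j ω| := abs_mul _ _
      _ ≤ (1 / t) * (n * κ) := by
          apply mul_le_mul hθ (hω j) (abs_nonneg _) (by positivity)
  -- integral of cosh bound
  have hIcosh : ∫ ω, Real.cosh (Z ω / t) ∂μ ≤ d * B := by
    have hθ1 : |(1:ℝ)/t| ≤ 1/t := by rw [abs_of_pos (by positivity)]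
    have hθ2 : |(-(1/t) : ℝ)| ≤ 1/t := by rw [abs_neg]; exact hθ1
    have hcoshSint : ∀ j : Fin d, Integrable (fun ω => Real.cosh (S j ω / t)) μ := by
      intro j
      have := ((hexpSint j (1/t) hθ1).add (hexpSint j (-(1/t)) hθ2)).div_const 2
      refine this.congr (Filter.Eventually.of_forall (fun ω => ?_))
      simp only [Pi.add_apply]
      rw [Real.cosh_eq]
      have e1 : 1 / t * S j ω = S j ω / t := by ring
      have e2 : -(1 / t) * S j ω = -(S j ω / t) := by ring
      rw [e1, e2]
    calc ∫ ω, Real.cosh (Z ω / t) ∂μ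
        ≤ ∫ ω, ∑ j, Real.cosh (S j ω / t) ∂μ := by
          refine integral_mono_ae hcoshZint ?_ (Filter.Eventually.of_forall hpt)
          exact integrable_finset_sum _ (fun j _ => hcoshSint j)
      _ = ∑ j, ∫ ω, Real.cosh (S j ω / t) ∂μ :=
          integral_finset_sum _ (fun j _ => hcoshSint j)
      _ ≤ ∑ _j : Fin d, B := by
          refine Finset.sum_le_sum (fun j _ => ?_)
          have he : ∀ ω, Real.cosh (S j ω / t)
              = (Real.exp ((1/t) * S j ω) + Real.exp ((-(1/t)) * S j ω)) / 2 := by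
            intro ω
            rw [Real.cosh_eq]
            have e1 : 1 / t * S j ω = S j ω / t := by ring
            have e2 : -(1 / t) * S j ω = -(S j ω / t) := by ring
            rw [e1, e2]
          have : ∫ ω, Real.cosh (S j ω / t) ∂μ
              = (mgf (S j) μ (1/t) + mgf (S j) μ (-(1/t))) / 2 := by
            simp_rw [he]
            rw [integral_div, integral_add (hexpSint j (1/t) hθ1)
              (hexpSint j (-(1/t)) hθ2)]
            rfl
          rw [this]
          have b1 := hmgf j (1/t) hθ1
          have b2 := hmgf j (-(1/t)) hθ2
          linarith
      _ = d * B := by simp [mul_comm]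
  -- Jensen
  have hJ : Real.cosh (Real.sqrt (∫ ω, (Z ω / t) ^ 2 ∂μ)) ≤ ∫ ω, Real.cosh (Z ω / t) ∂μ := by
    have hmem : ∀ᵐ ω ∂μ, (Z ω / t) ^ 2 ∈ Set.Ici (0:ℝ) :=
      Filter.Eventually.of_forall (fun ω => Set.mem_Ici.2 (sq_nonneg _))
    have hgi : Integrable ((fun w => Real.cosh (Real.sqrt w)) ∘ (fun ω => (Z ω / t) ^ 2)) μ := by
      refine hcoshZint.congr (Filter.Eventually.of_forall (fun ω => ?_))
      simp only [Function.comp_apply]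
      rw [Real.sqrt_sq_eq_abs, Real.cosh_abs]
    have := aux_convex.map_integral_le
      (Real.continuous_cosh.comp Real.continuous_sqrt).continuousOn isClosed_Ici hmem hZ2int hgi
    refine le_trans this ?_
    apply le_of_eq
    refine integral_congr_ae (Filter.Eventually.of_forall (fun ω => ?_))
    simp only [Function.comp_apply]
    rw [Real.sqrt_sq_eq_abs, Real.cosh_abs]
  -- conclude
  have hint2 : ∫ ω, (Z ω / t) ^ 2 ∂μ = (∫ ω, Z ω ^ 2 ∂μ) / t ^ 2 := by
    rw [← integral_div]
    congr 1; funext ω; rw [div_pow]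
  have hsqrt : Real.sqrt (∫ ω, (Z ω / t) ^ 2 ∂μ) = Real.sqrt (∫ ω, Z ω ^ 2 ∂μ) / t := by
    rw [hint2, Real.sqrt_div (integral_nonneg (fun ω => sq_nonneg _)), Real.sqrt_sq htpos.le]
  have hkey : Real.sqrt (∫ ω, Z ω ^ 2 ∂μ) / t ≤ Real.log (2 * d * B) := by
    rw [← hsqrt]
    rw [Real.le_log_iff_exp_le (by positivity)]
    calc Real.exp (Real.sqrt (∫ ω, (Z ω / t) ^ 2 ∂μ))
        ≤ 2 * Real.cosh (Real.sqrt (∫ ω, (Z ω / t) ^ 2 ∂μ)) := by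
          rw [Real.cosh_eq]
          have := (Real.exp_pos (-(Real.sqrt (∫ ω, (Z ω / t) ^ 2 ∂μ)))).le
          linarith
      _ ≤ 2 * (d * B) := by linarith [hJ.trans hIcosh]
      _ = 2 * d * B := by ring
  have hlog : Real.log (2 * d * B) = Real.log (2 * d) + eL / κ ^ 2 * Γ := by
    rw [Real.log_mul (by positivity) hBpos.ne', hB, Real.log_exp]
  have hfinal : Real.sqrt (∫ ω, Z ω ^ 2 ∂μ) ≤ t * (Real.log (2 * d) + eL / κ ^ 2 * Γ) := by
    rw [← hlog]
    calc Real.sqrt (∫ ω, Z ω ^ 2 ∂μ) = t * (Real.sqrt (∫ ω, Z ω ^ 2 ∂μ) / t) := by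
          field_simp
      _ ≤ t * Real.log (2 * d * B) := mul_le_mul_of_nonneg_left hkey htpos.le
  have halg : t * (Real.log (2 * d) + eL / κ ^ 2 * Γ)
      = κ * L * Real.log (2 * d) + Γ * L * eL / κ := by
    rw [ht]; field_simp
  calc Real.sqrt (∫ ω, Z ω ^ 2 ∂μ) ≤ t * (Real.log (2 * d) + eL / κ ^ 2 * Γ) := hfinal
    _ = κ * L * Real.log (2 * d) + Γ * L * eL / κ := halg
end
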